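/- For n ≥ 1 and ρ ∈ ℕ, let P(n,ρ) be the probability that a plane binary tree with n leaves chosen uniformly at random satisfies c(t) = ρ, i.e., P(n,ρ) = (number of plane binary trees with n leaves and c(t) = ρ)/C_{n−1}. Then P(1,0) = 1, P(1,ρ) = 0 for ρ ≥ 1, and for all n ≥ 2 and ρ ≥ 1, P(n,ρ) = Σ_{d ∈ Div(ρ)} Σ_{j=1}^{n−1} (C_{j−1}·C_{n−j−1}/C_{n−1}) · P(j, d−1) · P(n−j, ρ/d − 1), where Div(ρ) is the set of positive divisors of ρ. -/

import Mathlib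

/-- Plane binary trees: a leaf, or an ordered pair of plane binary trees. -/
inductive PTree : Type where
  | leaf : PTree
  | node : PTree → PTree → PTree
deriving DecidableEq

namespace PTree

/-- Number of leaves of a plane binary tree. -/
def leaves : PTree → ℕ
  | leaf => 1
  | node l r => leaves l + leaves r

/-- Number of root ancestral configurations:
`c(leaf) = 0`, `c(node l r) = (c l + 1) * (c r + 1)`. -/
def c : PTree → ℕ
  | leaf => 0
  | node l r => (c l + 1) * (c r + 1)

/-- The finite set of plane binary trees with `n` leaves. -/
def trees : ℕ → Finset PTree
  | 0 => ∅
  | 1 => {leaf}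
  | (n+2) =>
      (Finset.Icc 1 (n+1)).attach.biUnion fun j =>
        ((trees j.1) ×ˢ (trees (n+2-j.1))).image fun p => node p.1 p.2
decreasing_by
  · have h := Finset.mem_Icc.mp j.2; omega
  · have h := Finset.mem_Icc.mp j.2; omega

end PTree

namespace PTree

lemma leaves_pos (t : PTree) : 1 ≤ t.leaves := by
  induction t <;> simp [leaves] <;> omega

lemma mem_trees_iff : ∀ (n : ℕ) (t : PTree), t ∈ trees n ↔ t.leaves = n
  | 0, t => by
      simp only [trees, Finset.notMem_empty, false_iff]
      have := leaves_pos t; omega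
  | 1, t => by
      simp only [trees, Finset.mem_singleton]
      constructor
      · rintro rfl; rfl
      · intro h; cases t with
        | leaf => rfl
        | node l r =>
            exfalso
            have hl := leaves_pos l; have hr := leaves_pos r
            simp [leaves] at h; omega
  | (n+2), t => by
      rw [trees]
      simp only [Finset.mem_biUnion, Finset.mem_attach, true_and, Finset.mem_image,
        Finset.mem_product, Subtype.exists, Prod.exists]
      constructor
      · rintro ⟨j, hj, l, r, ⟨hl, hr⟩, rfl⟩
        have hj' := Finset.mem_Icc.mp hj
        have h1 : l.leaves = j := (mem_trees_iff j l).mp hl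
        have h2 : r.leaves = n+2-j := (mem_trees_iff (n+2-j) r).mp hr
        simp [leaves]; omega
      · intro h
        cases t with
        | leaf => simp [leaves] at h
        | node l r =>
            have hl := leaves_pos l; have hr := leaves_pos r
            simp only [leaves] at h
            refine ⟨l.leaves, Finset.mem_Icc.mpr ⟨hl, by omega⟩, l, r, ⟨?_, ?_⟩, rfl⟩
            · exact (mem_trees_iff l.leaves l).mpr rfl
            · exact (mem_trees_iff (n+2-l.leaves) r).mpr (by omega)
  termination_by n => n
  decreasing_by
    all_goals simp_all [leaves, Finset.mem_Icc] <;> omega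



lemma node_inj : Function.Injective (fun p : PTree × PTree => node p.1 p.2) := by
  rintro ⟨a,b⟩ ⟨c,d⟩ h; simp at h; simp [h.1, h.2]

lemma prod_filter_eq (j k ρ : ℕ) (hρ : 1 ≤ ρ) :
    ((trees j ×ˢ trees k).filter fun p => (c p.1 + 1) * (c p.2 + 1) = ρ) =
      ρ.divisors.biUnion fun d =>
        ((trees j).filter fun t => c t = d - 1) ×ˢ
          ((trees k).filter fun t => c t = ρ / d - 1) := by
  ext ⟨l, r⟩
  simp only [Finset.mem_filter, Finset.mem_product, Finset.mem_biUnion, Nat.mem_divisors]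
  constructor
  · rintro ⟨⟨hl, hr⟩, h⟩
    refine ⟨c l + 1, ⟨⟨c r + 1, h.symm⟩, by omega⟩, ⟨hl, by omega⟩, ⟨hr, ?_⟩⟩
    have : ρ / (c l + 1) = c r + 1 := by
      rw [← h]; exact Nat.mul_div_cancel_left _ (by omega)
    omega
  · rintro ⟨d, ⟨hd, hρ0⟩, ⟨hl, hcl⟩, ⟨hr, hcr⟩⟩
    have hd1 : 1 ≤ d := Nat.pos_of_dvd_of_pos hd hρ
    have hq1 : 1 ≤ ρ / d := Nat.le_div_iff_mul_le (by omega) |>.mpr (by simpa using Nat.le_of_dvd hρ hd)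
    refine ⟨⟨hl, hr⟩, ?_⟩
    have : c l + 1 = d := by omega
    have h2 : c r + 1 = ρ / d := by omega
    rw [this, h2, Nat.mul_div_cancel' hd]

lemma count_rec (m ρ : ℕ) (hρ : 1 ≤ ρ) :
    (((trees (m+2)).filter fun t => c t = ρ)).card =
      ∑ d ∈ ρ.divisors, ∑ j ∈ Finset.Icc 1 (m+1),
        (((trees j).filter fun t => c t = d - 1)).card *
          (((trees (m+2-j)).filter fun t => c t = ρ / d - 1)).card := by
  rw [trees, Finset.filter_biUnion, Finset.card_biUnion]
  · rw [Finset.sum_comm]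
    rw [← Finset.sum_attach (Finset.Icc 1 (m+1)) (fun j => ∑ d ∈ ρ.divisors,
        (((trees j).filter fun t => c t = d - 1)).card *
          (((trees (m+2-j)).filter fun t => c t = ρ / d - 1)).card)]
    refine Finset.sum_congr rfl fun j _ => ?_
    have him : ((trees j.1 ×ˢ trees (m+2-j.1)).image fun p => node p.1 p.2).filter
        (fun t => c t = ρ) =
        ((trees j.1 ×ˢ trees (m+2-j.1)).filter fun p => (c p.1 + 1) * (c p.2 + 1) = ρ).image
          fun p => node p.1 p.2 := by
      rw [Finset.filter_image]
      rfl
    rw [him, Finset.card_image_of_injective _ node_inj, prod_filter_eq _ _ _ hρ,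
      Finset.card_biUnion]
    · exact Finset.sum_congr rfl fun d _ => Finset.card_product _ _
    · intro d hd d' hd' hne
      simp only [Finset.disjoint_left, Finset.mem_product, Finset.mem_filter]
      rintro ⟨l, r⟩ ⟨⟨_, h1⟩, _⟩ ⟨⟨_, h2⟩, _⟩
      have := Nat.pos_of_mem_divisors hd
      have := Nat.pos_of_mem_divisors hd'
      omega
  · intro j hj j' hj' hne
    simp only [Finset.disjoint_left, Finset.mem_filter, Finset.mem_image, Finset.mem_product,
      Prod.exists]
    rintro t ⟨⟨l, r, ⟨hl, hr⟩, rfl⟩, _⟩ ⟨⟨l', r', ⟨hl', hr'⟩, het⟩, _⟩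
    apply hne
    have h1 := (mem_trees_iff _ _).mp hl
    have h2 := (mem_trees_iff _ _).mp hl'
    cases het
    exact Subtype.ext (h2 ▸ h1 ▸ rfl)


end PTree

/-- `P n ρ`: the probability that a plane binary tree with `n` leaves chosen uniformly at
random has exactly `ρ` root configurations. -/
def P (n ρ : ℕ) : ℚ :=
  (((PTree.trees n).filter (fun t => PTree.c t = ρ)).card : ℚ) / (catalan (n - 1) : ℚ)

/-- `P 1 0 = 1`, `P 1 ρ = 0` for `ρ ≥ 1`, and for `n ≥ 2`, `ρ ≥ 1`,
`P n ρ = Σ_{d ∣ ρ} Σ_{j=1}^{n−1} (C_{j−1}·C_{n−j−1}/C_{n−1}) · P j (d−1) · P (n−j) (ρ/d − 1)`. -/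
theorem P_recurrence :
    P 1 0 = 1 ∧ (∀ ρ : ℕ, 1 ≤ ρ → P 1 ρ = 0) ∧
    ∀ n : ℕ, 2 ≤ n → ∀ ρ : ℕ, 1 ≤ ρ →
      P n ρ =
        ∑ d ∈ ρ.divisors, ∑ j ∈ Finset.Icc 1 (n - 1),
          ((catalan (j - 1) : ℚ) * (catalan (n - j - 1) : ℚ) / (catalan (n - 1) : ℚ)) *
            P j (d - 1) * P (n - j) (ρ / d - 1) := by
  have hcat : ∀ k : ℕ, (catalan k : ℚ) ≠ 0 := by
    intro k
    have h := succ_mul_catalan_eq_centralBinom k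
    have h2 := k.centralBinom_pos
    have : catalan k ≠ 0 := by intro h0; rw [h0, mul_zero] at h; omega
    exact_mod_cast this
  refine ⟨?_, ?_, ?_⟩
  · simp [P, PTree.trees, PTree.c, Finset.filter_singleton]
  · intro ρ hρ
    simp [P, PTree.trees, PTree.c, Finset.filter_singleton]
    exact if_neg (show ¬ (0 = ρ) by omega)
  · intro n hn ρ hρ
    obtain ⟨m, rfl⟩ : ∃ m, n = m + 2 := ⟨n - 2, by omega⟩
    symm
    calc ∑ d ∈ ρ.divisors, ∑ j ∈ Finset.Icc 1 (m + 2 - 1),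
          ((catalan (j - 1) : ℚ) * (catalan (m + 2 - j - 1) : ℚ) / (catalan (m + 2 - 1) : ℚ)) *
            P j (d - 1) * P (m + 2 - j) (ρ / d - 1)
        = ∑ d ∈ ρ.divisors, ∑ j ∈ Finset.Icc 1 (m + 1),
            ((((PTree.trees j).filter fun t => PTree.c t = d - 1).card *
              ((PTree.trees (m + 2 - j)).filter fun t => PTree.c t = ρ / d - 1).card : ℕ) : ℚ) /
              (catalan (m + 1) : ℚ) := by
          refine Finset.sum_congr rfl fun d hd => Finset.sum_congr rfl fun j hj => ?_
          simp only [P]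
          have h1 := hcat (j - 1); have h2 := hcat (m + 2 - j - 1); have h3 := hcat (m + 1)
          push_cast
          field_simp
      _ = ((∑ d ∈ ρ.divisors, ∑ j ∈ Finset.Icc 1 (m + 1),
            (((PTree.trees j).filter fun t => PTree.c t = d - 1).card *
              ((PTree.trees (m + 2 - j)).filter fun t => PTree.c t = ρ / d - 1).card : ℕ) : ℕ) : ℚ) /
              (catalan (m + 1) : ℚ) := by
          push_cast
          simp_rw [Finset.sum_div]
      _ = P (m + 2) ρ := by
          rw [← PTree.count_rec m ρ hρ, P]
          norm_num
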